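/- For a toral AdS black hole with black hole phase existence requiring T ≥ T_c = ħ/(2πKL), parameterizing r_h³ = γML²/(πK²), the condition T ≥ T_c is equivalent to M ≥ 8πLγ²/(K(4γ−2)³) (for γ ∈ (1/2, 2]). -/

import Mathlib

open Real

/-- Existence of the black-hole phase (T ≥ T_c) is equivalent to M ≥ 8πLγ²/(K(4γ−2)³). -/
theorem stmt12 (hbar L K M γ : ℝ) (hhbar : 0 < hbar) (hL : 0 < L) (hK : 0 < K) (hM : 0 < M)
    (hγ : γ ∈ Set.Ioc (1/2:ℝ) 2) :
    let rh := (γ*M*L^2/(π*K^2)) ^ ((1:ℝ)/3)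
    let T := hbar*(rh/(π*L^2) - M/(2*π^2*K^2*rh^2))
    let Tc := hbar/(2*π*K*L)
    (Tc ≤ T ↔ 8*π*L*γ^2/(K*(4*γ-2)^3) ≤ M) := by
  obtain ⟨hγ1, hγ2⟩ := hγ
  have hπ := Real.pi_pos
  have hγ0 : (0:ℝ) < γ := by linarith
  have hg : (0:ℝ) < 2*γ - 1 := by linarith
  intro rh T Tc
  have hApos : 0 < γ*M*L^2/(π*K^2) := by positivity
  have hrh : 0 < rh := Real.rpow_pos_of_pos hApos _
  have hrh3 : rh^3 = γ*M*L^2/(π*K^2) := by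
    show ((γ*M*L^2/(π*K^2)) ^ ((1:ℝ)/3))^(3:ℕ) = _
    rw [← Real.rpow_natCast _ 3, ← Real.rpow_mul hApos.le]
    norm_num
  have hM' : M = π*K^2*rh^3/(γ*L^2) := by
    rw [hrh3]; field_simp
  set c := γ*L/((2*γ-1)*K) with hc
  have hcpos : 0 < c := by positivity
  have hT : T = hbar*(2*γ-1)/(2*π*γ*L^2) * rh := by
    show hbar*(rh/(π*L^2) - M/(2*π^2*K^2*rh^2)) = _
    rw [hM']
    field_simp
  have hTc : Tc = hbar*(2*γ-1)/(2*π*γ*L^2) * c := by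
    show hbar/(2*π*K*L) = _
    rw [hc]; field_simp
  have h1 : Tc ≤ T ↔ c ≤ rh := by
    rw [hT, hTc]
    exact mul_le_mul_iff_right₀ (by positivity)
  have h2 : c ≤ rh ↔ c^3 ≤ rh^3 := by
    constructor
    · intro h; exact pow_le_pow_left₀ hcpos.le h 3
    · intro h
      by_contra hcon
      push_neg at hcon
      have := pow_lt_pow_left₀ hcon hrh.le (by norm_num : (3:ℕ) ≠ 0)
      linarith
  rw [h1, h2, hrh3, hc]
  rw [div_pow, div_le_div_iff₀ (by positivity) (by positivity),
    div_le_iff₀ (mul_pos hK (pow_pos (by linarith : (0:ℝ) < 4*γ-2) 3))]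
  have hpos : (0:ℝ) < γ*L^2*K^2 := by positivity
  constructor
  · intro h; nlinarith [h, hpos, mul_pos hπ hpos]
  · intro h; nlinarith [h, hpos, mul_pos hπ hpos]
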